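/- Let C ⊆ F_2^n be a linear code, f = (2^n/|C|)·1_C, and 0 ≤ ε ≤ 1/2 with p = (1-2ε)². Then E(T_ε f)² = E_{S ∼ p} 2^{|S| - r_C(S)}, where S ∼ p is a random subset of [n] with each element included independently with probability p, and r_C(S) is the rank of the columns of a generating matrix of C indexed by S. -/

import Mathlib

open Finset

/-- Rank of the column submatrix of `G` indexed by `T`. -/
noncomputable def colRank {n k : ℕ} (G : Fin k → Fin n → ZMod 2) (T : Finset (Fin n)) : ℕ :=
  Module.finrank (ZMod 2)
    (Submodule.span (ZMod 2) ((fun j => fun i => G i j) '' (T : Set (Fin n))))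

open Classical in
/-- The scaled indicator function `f = (2^n/|C|)·1_C`. -/
noncomputable def codeFn (n : ℕ) (C : Submodule (ZMod 2) (Fin n → ZMod 2))
    (x : Fin n → ZMod 2) : ℝ :=
  if x ∈ C then (2 : ℝ) ^ n / (Nat.card C) else 0

/-- Noise operator on the cube `(ZMod 2)^n`. -/
noncomputable def noiseOpZ (n : ℕ) (ε : ℝ) (f : (Fin n → ZMod 2) → ℝ)
    (x : Fin n → ZMod 2) : ℝ :=
  ∑ y : Fin n → ZMod 2, ε ^ hammingDist x y * (1 - ε) ^ (n - hammingDist x y) * f y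

namespace NoiseCodeSM

lemma zmod2_cases (a : ZMod 2) : a = 0 ∨ a = 1 := by revert a; decide

lemma zmod2_one_ne_zero : (1 : ZMod 2) ≠ 0 := by decide
lemma zmod2_one_add_one : (1 : ZMod 2) + 1 = 0 := by decide

noncomputable def chi (a : ZMod 2) : ℝ := if a = 0 then 1 else -1

@[simp] lemma chi_zero : chi 0 = 1 := if_pos rfl
@[simp] lemma chi_one : chi 1 = -1 := if_neg zmod2_one_ne_zero

lemma chi_add (a b : ZMod 2) : chi (a + b) = chi a * chi b := by
  rcases zmod2_cases a with ha | ha <;> rcases zmod2_cases b with hb | hb <;>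
    subst ha <;> subst hb <;>
    simp [chi, zmod2_one_add_one, zmod2_one_ne_zero]

lemma chi_sum {ι : Type*} (s : Finset ι) (f : ι → ZMod 2) :
    chi (∑ i ∈ s, f i) = ∏ i ∈ s, chi (f i) := by
  induction s using Finset.cons_induction with
  | empty => simp
  | cons a s ha ih => rw [Finset.sum_cons, Finset.prod_cons, chi_add, ih]

lemma sum_zmod2 (F : ZMod 2 → ℝ) : ∑ u : ZMod 2, F u = F 0 + F 1 := by
  have h : (univ : Finset (ZMod 2)) = {0, 1} := by decide
  rw [h, Finset.sum_insert (by decide), Finset.sum_singleton]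

lemma card_filter_eq {n : ℕ} (x y : Fin n → ZMod 2) :
    (univ.filter fun j => x j = y j).card = n - hammingDist x y := by
  have h := Finset.card_filter_add_card_filter_not
      (s := (univ : Finset (Fin n))) (p := fun j => x j = y j)
  simp only [Finset.card_univ, Fintype.card_fin] at h
  have hd : hammingDist x y = (univ.filter fun j => ¬ x j = y j).card := by
    simp [hammingDist, ne_eq]
  omega

lemma prod_ite_dist {n : ℕ} (x y : Fin n → ZMod 2) (a b : ℝ) :
    (∏ j, if x j = y j then a else b)
      = b ^ hammingDist x y * a ^ (n - hammingDist x y) := by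
  rw [← Finset.prod_filter_mul_prod_filter_not univ (fun j => x j = y j)]
  rw [Finset.prod_congr rfl (fun j hj => if_pos (Finset.mem_filter.mp hj).2),
    Finset.prod_congr rfl (fun j hj => if_neg (Finset.mem_filter.mp hj).2),
    Finset.prod_const, Finset.prod_const, card_filter_eq]
  have hd : (univ.filter fun j => ¬ x j = y j).card = hammingDist x y := by
    simp [hammingDist, ne_eq]
  rw [hd, mul_comm]

lemma prod_ite_norm {n : ℕ} (v : Fin n → ZMod 2) (a b : ℝ) :
    (∏ j, if v j = 0 then a else b)
      = b ^ hammingNorm v * a ^ (n - hammingNorm v) := by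
  have h := prod_ite_dist v 0 a b
  simpa [hammingDist_zero_right] using h

lemma dist_add {n : ℕ} (y c : Fin n → ZMod 2) : hammingDist y (y + c) = hammingNorm c := by
  simp [hammingDist, hammingNorm, Pi.add_apply, ne_eq, left_eq_add]

set_option maxHeartbeats 1000000 in
lemma sum_W {n : ℕ} (ε : ℝ) (y z : Fin n → ZMod 2) :
    (∑ x : Fin n → ZMod 2,
      (ε ^ hammingDist x y * (1 - ε) ^ (n - hammingDist x y)) *
        (ε ^ hammingDist x z * (1 - ε) ^ (n - hammingDist x z)))
      = (2*ε*(1-ε)) ^ hammingDist y z * ((1-ε)^2 + ε^2) ^ (n - hammingDist y z) := by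
  have key : ∀ x w : Fin n → ZMod 2,
      ε ^ hammingDist x w * (1-ε) ^ (n - hammingDist x w)
        = ∏ j, if x j = w j then 1 - ε else ε := fun x w => (prod_ite_dist x w (1-ε) ε).symm
  have h1 : ∀ x : Fin n → ZMod 2,
      (ε ^ hammingDist x y * (1 - ε) ^ (n - hammingDist x y)) *
        (ε ^ hammingDist x z * (1 - ε) ^ (n - hammingDist x z))
      = ∏ j, ((if x j = y j then 1-ε else ε) * (if x j = z j then 1-ε else ε)) := by
    intro x
    rw [key x y, key x z, ← Finset.prod_mul_distrib]
  rw [Finset.sum_congr rfl (fun x _ => h1 x)]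
  rw [show (∑ x : Fin n → ZMod 2,
        ∏ j, ((if x j = y j then 1-ε else ε) * (if x j = z j then 1-ε else ε)))
      = ∏ j, ∑ u : ZMod 2, ((if u = y j then 1-ε else ε) * (if u = z j then 1-ε else ε))
    from (Fintype.prod_sum (fun (j : Fin n) (u : ZMod 2) =>
      (if u = y j then 1-ε else ε) * (if u = z j then 1-ε else ε))).symm]
  rw [show (∏ j, ∑ u : ZMod 2, ((if u = y j then 1-ε else ε) * (if u = z j then 1-ε else ε)))
      = ∏ j, (if y j = z j then (1-ε)^2 + ε^2 else 2*ε*(1-ε)) from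
    Finset.prod_congr rfl (fun j _ => by
      rw [sum_zmod2]
      rcases zmod2_cases (y j) with hy | hy <;> rcases zmod2_cases (z j) with hz | hz <;>
        rw [hy, hz] <;>
        simp [zmod2_one_ne_zero, one_ne_zero, zero_ne_one] <;> ring)]
  rw [prod_ite_dist y z ((1-ε)^2 + ε^2) (2*ε*(1-ε))]

lemma binom {ι : Type*} [DecidableEq ι] (s : Finset ι) (q : ℝ) :
    ∑ t ∈ s.powerset, q ^ t.card * (1-q) ^ (s.card - t.card) = 1 := by
  have hl : (∏ _i ∈ s, (q + (1 - q))) = 1 := by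
    rw [Finset.prod_congr rfl (fun i _ => by ring_nf : ∀ i ∈ s, q + (1-q) = (1:ℝ))]
    exact Finset.prod_const_one
  calc ∑ t ∈ s.powerset, q ^ t.card * (1-q) ^ (s.card - t.card)
      = ∑ t ∈ s.powerset, (∏ _i ∈ t, q) * ∏ _i ∈ s \ t, (1-q) := by
        refine Finset.sum_congr rfl fun t ht => ?_
        rw [Finset.prod_const, Finset.prod_const,
          Finset.card_sdiff_of_subset (Finset.mem_powerset.mp ht)]
    _ = ∏ _i ∈ s, (q + (1 - q)) := (Finset.prod_add _ _ s).symm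
    _ = 1 := hl

lemma superset_sum {n : ℕ} (q : ℝ) (A : Finset (Fin n)) :
    (∑ S : Finset (Fin n), if A ⊆ S then q ^ S.card * (1-q) ^ (n - S.card) else 0)
      = q ^ A.card := by
  classical
  rw [Finset.sum_ite, Finset.sum_const_zero, add_zero]
  have hbij : ∑ S ∈ univ.filter (fun S => A ⊆ S), q ^ S.card * (1-q) ^ (n - S.card)
      = ∑ U ∈ Aᶜ.powerset, q ^ (A ∪ U).card * (1-q) ^ (n - (A ∪ U).card) := by
    refine Finset.sum_nbij' (fun S => S \ A) (fun U => A ∪ U) ?_ ?_ ?_ ?_ ?_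
    · intro S hS
      rw [Finset.mem_powerset]
      intro x hx
      rw [Finset.mem_compl]
      exact (Finset.mem_sdiff.mp hx).2
    · intro U hU
      simp only [Finset.mem_filter, Finset.mem_univ, true_and]
      exact Finset.subset_union_left
    · intro S hS
      exact Finset.union_sdiff_of_subset (Finset.mem_filter.mp hS).2
    · intro U hU
      refine Finset.union_sdiff_cancel_left ?_
      rw [Finset.disjoint_left]
      intro x hxA hxU
      exact (Finset.mem_compl.mp (Finset.mem_powerset.mp hU hxU)) hxA
    · intro S hS
      congr 2 <;> rw [Finset.union_sdiff_of_subset (Finset.mem_filter.mp hS).2]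
  rw [hbij]
  have hterm : ∀ U ∈ Aᶜ.powerset,
      q ^ (A ∪ U).card * (1-q) ^ (n - (A ∪ U).card)
        = q ^ A.card * (q ^ U.card * (1-q) ^ (Aᶜ.card - U.card)) := by
    intro U hU
    have hdisj : Disjoint A U := by
      rw [Finset.disjoint_left]
      intro x hxA hxU
      exact (Finset.mem_compl.mp (Finset.mem_powerset.mp hU hxU)) hxA
    have hcard : (A ∪ U).card = A.card + U.card := Finset.card_union_of_disjoint hdisj
    have hAc : Aᶜ.card = n - A.card := by
      rw [Finset.card_compl, Fintype.card_fin]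
    have hle : A.card + U.card ≤ n := by
      have h2 := Finset.card_le_univ (A ∪ U)
      rw [Fintype.card_fin] at h2
      omega
    rw [hcard, hAc, pow_add]
    have : n - (A.card + U.card) = n - A.card - U.card := by omega
    rw [this]; ring
  rw [Finset.sum_congr rfl hterm, ← Finset.mul_sum, binom, mul_one]

set_option maxHeartbeats 1000000 in
lemma inner_sum {n : ℕ} (c : Fin n → ZMod 2) (q : ℝ) :
    (∑ v : Fin n → ZMod 2, chi (∑ j, c j * v j) * q ^ hammingNorm v)
      = (1-q) ^ hammingNorm c * (1+q) ^ (n - hammingNorm c) := by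
  have h1 : ∀ v : Fin n → ZMod 2, chi (∑ j, c j * v j) * q ^ hammingNorm v
      = ∏ j, (chi (c j * v j) * (if v j = 0 then 1 else q)) := by
    intro v
    rw [chi_sum, show q ^ hammingNorm v = ∏ j, (if v j = 0 then 1 else q) from by
        rw [prod_ite_norm v 1 q, one_pow, mul_one], ← Finset.prod_mul_distrib]
  rw [Finset.sum_congr rfl (fun v _ => h1 v)]
  rw [show (∑ v : Fin n → ZMod 2, ∏ j, (chi (c j * v j) * (if v j = 0 then 1 else q)))
      = ∏ j, ∑ u : ZMod 2, (chi (c j * u) * (if u = 0 then 1 else q))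
    from (Fintype.prod_sum (fun (j : Fin n) (u : ZMod 2) =>
      chi (c j * u) * (if u = 0 then 1 else q))).symm]
  rw [show (∏ j, ∑ u : ZMod 2, (chi (c j * u) * (if u = 0 then 1 else q)))
      = ∏ j, (if c j = 0 then 1 + q else 1 - q) from Finset.prod_congr rfl (fun j _ => by
        rw [sum_zmod2]
        rcases zmod2_cases (c j) with hc | hc <;> rw [hc] <;>
          simp [zmod2_one_ne_zero, one_ne_zero] <;> ring)]
  rw [prod_ite_norm c (1+q) (1-q)]

lemma orth {n k : ℕ} (G : Fin k → Fin n → ZMod 2) (C : Submodule (ZMod 2) (Fin n → ZMod 2))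
    (hC : C = Submodule.span (ZMod 2) (Set.range G)) [DecidablePred (· ∈ C)]
    (v : Fin n → ZMod 2) :
    (∑ c : Fin n → ZMod 2, if c ∈ C then chi (∑ j, c j * v j) else 0)
      = if ∀ i, (∑ j, G i j * v j) = 0 then (Nat.card C : ℝ) else 0 := by
  set L := Fintype.linearCombination (ZMod 2) v with hL
  have hLapp : ∀ c : Fin n → ZMod 2, L c = ∑ j, c j * v j := by
    intro c
    rw [hL, Fintype.linearCombination_apply]
    exact Finset.sum_congr rfl fun j _ => by rw [smul_eq_mul]
  by_cases h : ∀ i, (∑ j, G i j * v j) = 0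
  · have hker : ∀ c ∈ C, (∑ j, c j * v j) = 0 := by
      intro c hc
      have hsub : Set.range G ⊆ (LinearMap.ker L : Set _) := by
        rintro _ ⟨i, rfl⟩
        simp only [SetLike.mem_coe, LinearMap.mem_ker]
        rw [hLapp]
        exact h i
      have hle : C ≤ LinearMap.ker L := hC ▸ Submodule.span_le.mpr hsub
      have := hle hc
      rw [LinearMap.mem_ker, hLapp] at this
      exact this
    rw [if_pos h]
    have heq : ∀ c : Fin n → ZMod 2,
        (if c ∈ C then chi (∑ j, c j * v j) else 0) = (if c ∈ C then (1:ℝ) else 0) := by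
      intro c; by_cases hc : c ∈ C
      · rw [if_pos hc, if_pos hc, hker c hc, chi_zero]
      · rw [if_neg hc, if_neg hc]
    rw [Finset.sum_congr rfl fun c _ => heq c, Finset.sum_boole]
    rw [Nat.card_eq_fintype_card, Fintype.card_subtype]
  · rw [if_neg h]
    push_neg at h; obtain ⟨i, hi⟩ := h
    have hc0C : G i ∈ C := by rw [hC]; exact Submodule.subset_span ⟨i, rfl⟩
    have hc0v : (∑ j, G i j * v j) = 1 := by
      rcases zmod2_cases (∑ j, G i j * v j) with h0 | h1
      · exact absurd h0 hi
      · exact h1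
    set T := ∑ c : Fin n → ZMod 2, (if c ∈ C then chi (∑ j, c j * v j) else 0) with hT
    have hre : T = ∑ c : Fin n → ZMod 2,
        (if G i + c ∈ C then chi (∑ j, (G i + c) j * v j) else 0) :=
      (Equiv.sum_comp (Equiv.addLeft (G i))
        (fun c => if c ∈ C then chi (∑ j, c j * v j) else 0)).symm
    have hpt : ∀ c : Fin n → ZMod 2,
        (if G i + c ∈ C then chi (∑ j, (G i + c) j * v j) else 0)
          = - (if c ∈ C then chi (∑ j, c j * v j) else 0) := by
      intro c
      by_cases hc : c ∈ C
      · rw [if_pos hc, if_pos ((Submodule.add_mem_iff_right C hc0C).mpr hc)]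
        have hsplit : (∑ j, (G i + c) j * v j) = (∑ j, G i j * v j) + ∑ j, c j * v j := by
          rw [← Finset.sum_add_distrib]
          exact Finset.sum_congr rfl fun j _ => by simp [Pi.add_apply, add_mul]
        rw [hsplit, chi_add, hc0v, chi_one]; ring
      · rw [if_neg hc,
          if_neg (fun hmem => hc ((Submodule.add_mem_iff_right C hc0C).mp hmem)), neg_zero]
    have hTT : T = -T :=
      calc T = ∑ c : Fin n → ZMod 2,
            (if G i + c ∈ C then chi (∑ j, (G i + c) j * v j) else 0) := hre
        _ = ∑ c : Fin n → ZMod 2,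
            - (if c ∈ C then chi (∑ j, c j * v j) else 0) :=
          Finset.sum_congr rfl fun c _ => hpt c
        _ = -T := by rw [Finset.sum_neg_distrib]
    linarith

set_option maxHeartbeats 1000000 in
lemma count_eq {n k : ℕ} (G : Fin k → Fin n → ZMod 2) (S : Finset (Fin n)) :
    ((univ.filter (fun v : Fin n → ZMod 2 =>
        (∀ i, (∑ j, G i j * v j) = 0) ∧ ∀ j, v j ≠ 0 → j ∈ S)).card : ℝ)
      = 2 ^ ((S.card : ℝ) - colRank G S) := by
  classical
  set col : Fin n → (Fin k → ZMod 2) := fun j => fun i => G i j with hcol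
  set φ : ({x // x ∈ S} → ZMod 2) →ₗ[ZMod 2] (Fin k → ZMod 2) :=
    Fintype.linearCombination (ZMod 2) (fun j : {x // x ∈ S} => col j.1) with hφ
  have hrange : LinearMap.range φ
      = Submodule.span (ZMod 2) (col '' (S : Set (Fin n))) := by
    rw [hφ, Fintype.range_linearCombination]
    congr 1
    exact (Set.image_eq_range _ _).symm
  have hcolRank : Module.finrank (ZMod 2) (LinearMap.range φ) = colRank G S := by
    rw [hrange, colRank]
  have hrn := LinearMap.finrank_range_add_finrank_ker φ
  have hdom : Module.finrank (ZMod 2) ({x // x ∈ S} → ZMod 2) = S.card := by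
    rw [Module.finrank_pi, Fintype.card_coe]
  rw [hdom] at hrn
  haveI hfin : Fintype (LinearMap.ker φ) := Fintype.ofFinite _
  have hcard : Nat.card (LinearMap.ker φ)
      = 2 ^ Module.finrank (ZMod 2) (LinearMap.ker φ) := by
    rw [Nat.card_eq_fintype_card]
    have h2 := Module.card_eq_pow_finrank (K := ZMod 2) (V := LinearMap.ker φ)
    rwa [ZMod.card] at h2
  -- extension by zero
  set ext0 : ({x // x ∈ S} → ZMod 2) → (Fin n → ZMod 2) :=
    fun w j => if h : j ∈ S then w ⟨j, h⟩ else 0 with hext0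
  have hphi : ∀ w : {x // x ∈ S} → ZMod 2, ∀ i : Fin k,
      φ w i = ∑ j : Fin n, G i j * ext0 w j := by
    intro w i
    rw [hφ]
    show (∑ j : {x // x ∈ S}, w j • col j.1) i = _
    rw [Finset.sum_apply]
    have h1 : ∀ j : {x // x ∈ S}, (w j • col ↑j) i = G i ↑j * ext0 w ↑j := by
      intro j
      simp only [Pi.smul_apply, smul_eq_mul, hcol, hext0, dif_pos j.2, Subtype.coe_eta]
      ring
    rw [Finset.sum_congr rfl fun j _ => h1 j,
      Finset.sum_coe_sort S (fun j => G i j * ext0 w j)]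
    exact Finset.sum_subset (Finset.subset_univ S) (fun j _ hj => by
      simp only [hext0, dif_neg hj, mul_zero])
  have e : LinearMap.ker φ ≃ {v : Fin n → ZMod 2 //
      (∀ i, (∑ j, G i j * v j) = 0) ∧ ∀ j, v j ≠ 0 → j ∈ S} :=
    { toFun := fun w => ⟨ext0 w.1, by
        constructor
        · intro i
          rw [← hphi w.1 i]
          have hw := w.2
          rw [LinearMap.mem_ker] at hw
          rw [hw]
          rfl
        · intro j hj
          by_contra hjS
          exact hj (by simp only [hext0, dif_neg hjS])⟩
      invFun := fun v => ⟨fun j => v.1 j.1, by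
        rw [LinearMap.mem_ker]
        ext i
        rw [hphi]
        have hext : ∀ j, ext0 (fun j : {x // x ∈ S} => v.1 j.1) j = v.1 j := by
          intro j
          by_cases h : j ∈ S
          · simp only [hext0, dif_pos h]
          · simp only [hext0, dif_neg h]
            by_contra hne
            exact h (v.2.2 j fun h0 => hne h0.symm)
        rw [Finset.sum_congr rfl fun j _ => by rw [hext j]]
        exact v.2.1 i⟩
      left_inv := fun w => by
        apply Subtype.ext
        funext j
        simp only [hext0, dif_pos j.2, Subtype.coe_eta]
      right_inv := fun v => by
        apply Subtype.ext
        funext j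
        by_cases h : j ∈ S
        · simp only [hext0, dif_pos h]
        · simp only [hext0, dif_neg h]
          by_contra hne
          exact h (v.2.2 j fun h0 => hne h0.symm) }
  have hcount : (univ.filter (fun v : Fin n → ZMod 2 =>
      (∀ i, (∑ j, G i j * v j) = 0) ∧ ∀ j, v j ≠ 0 → j ∈ S)).card
      = Nat.card (LinearMap.ker φ) := by
    rw [← Fintype.card_subtype, ← Nat.card_eq_fintype_card]
    exact Nat.card_congr e.symm
  rw [hcolRank] at hrn
  have hle : colRank G S ≤ S.card := Nat.le.intro hrn
  have hdk : Module.finrank (ZMod 2) (LinearMap.ker φ) = S.card - colRank G S := by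
    clear_value col φ ext0
    clear e hphi hcount hcard
    omega
  rw [hcount, hcard, hdk]
  rw [show ((S.card : ℝ) - colRank G S) = ((S.card - colRank G S : ℕ) : ℝ) from by
    rw [Nat.cast_sub hle]]
  rw [Real.rpow_natCast, Nat.cast_pow, Nat.cast_ofNat]

set_option maxHeartbeats 1000000 in
lemma lhs_eq {n : ℕ} (C : Submodule (ZMod 2) (Fin n → ZMod 2)) (ε : ℝ)
    [DecidablePred (· ∈ C)] :
    ∑ x : Fin n → ZMod 2, noiseOpZ n ε (codeFn n C) x ^ 2
      = (Nat.card C : ℝ) * ((2:ℝ)^n / (Nat.card C))^2 *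
        ∑ c : Fin n → ZMod 2, (if c ∈ C then
          (2*ε*(1-ε)) ^ hammingNorm c * ((1-ε)^2+ε^2) ^ (n - hammingNorm c) else 0) := by
  have hcode : ∀ y, codeFn n C y = if y ∈ C then (2:ℝ)^n / (Nat.card C) else 0 := by
    intro y; rw [codeFn]; split_ifs with h <;> rfl
  have expand : ∀ x, noiseOpZ n ε (codeFn n C) x ^ 2
      = ∑ y : Fin n → ZMod 2, ∑ z : Fin n → ZMod 2,
          codeFn n C y * codeFn n C z *
            ((ε ^ hammingDist x y * (1-ε) ^ (n - hammingDist x y)) *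
             (ε ^ hammingDist x z * (1-ε) ^ (n - hammingDist x z))) := by
    intro x
    rw [noiseOpZ, sq, Finset.sum_mul_sum]
    exact Finset.sum_congr rfl fun y _ => Finset.sum_congr rfl fun z _ => by ring
  rw [Finset.sum_congr rfl fun x _ => expand x]
  rw [Finset.sum_comm]
  rw [Finset.sum_congr rfl fun y (_ : y ∈ univ) => Finset.sum_comm]
  have hinner : ∀ y z : Fin n → ZMod 2,
      (∑ x : Fin n → ZMod 2, codeFn n C y * codeFn n C z *
          ((ε ^ hammingDist x y * (1-ε) ^ (n - hammingDist x y)) *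
           (ε ^ hammingDist x z * (1-ε) ^ (n - hammingDist x z))))
        = codeFn n C y * codeFn n C z *
          ((2*ε*(1-ε)) ^ hammingDist y z * ((1-ε)^2+ε^2) ^ (n - hammingDist y z)) := by
    intro y z
    rw [← Finset.mul_sum, sum_W]
  rw [Finset.sum_congr rfl fun y _ => Finset.sum_congr rfl fun z _ => hinner y z]
  have hrow : ∀ y : Fin n → ZMod 2,
      (∑ z : Fin n → ZMod 2, codeFn n C y * codeFn n C z *
          ((2*ε*(1-ε)) ^ hammingDist y z * ((1-ε)^2+ε^2) ^ (n - hammingDist y z)))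
        = if y ∈ C then ((2:ℝ)^n / (Nat.card C))^2 *
            (∑ c : Fin n → ZMod 2, (if c ∈ C then
              (2*ε*(1-ε)) ^ hammingNorm c * ((1-ε)^2+ε^2) ^ (n - hammingNorm c) else 0))
          else 0 := by
    intro y
    by_cases hy : y ∈ C
    · rw [if_pos hy]
      have hre : (∑ z : Fin n → ZMod 2, codeFn n C y * codeFn n C z *
            ((2*ε*(1-ε)) ^ hammingDist y z * ((1-ε)^2+ε^2) ^ (n - hammingDist y z)))
          = ∑ c : Fin n → ZMod 2, codeFn n C y * codeFn n C (y + c) *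
            ((2*ε*(1-ε)) ^ hammingDist y (y + c)
              * ((1-ε)^2+ε^2) ^ (n - hammingDist y (y + c))) :=
        (Equiv.sum_comp (Equiv.addLeft y) (fun z => codeFn n C y * codeFn n C z *
            ((2*ε*(1-ε)) ^ hammingDist y z
              * ((1-ε)^2+ε^2) ^ (n - hammingDist y z)))).symm
      rw [hre]
      have hterm : ∀ c : Fin n → ZMod 2, codeFn n C y * codeFn n C (y + c) *
            ((2*ε*(1-ε)) ^ hammingDist y (y + c)
              * ((1-ε)^2+ε^2) ^ (n - hammingDist y (y + c)))
          = ((2:ℝ)^n / (Nat.card C))^2 * (if c ∈ C then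
              (2*ε*(1-ε)) ^ hammingNorm c * ((1-ε)^2+ε^2) ^ (n - hammingNorm c) else 0) := by
        intro c
        rw [hcode y, hcode (y + c), if_pos hy, dist_add]
        by_cases hc : c ∈ C
        · rw [if_pos ((Submodule.add_mem_iff_right C hy).mpr hc), if_pos hc]; ring
        · rw [if_neg (fun hm => hc ((Submodule.add_mem_iff_right C hy).mp hm)), if_neg hc]
          ring
      rw [Finset.sum_congr rfl fun c _ => hterm c, ← Finset.mul_sum]
    · rw [if_neg hy]
      refine Finset.sum_eq_zero fun z _ => ?_
      rw [hcode y, if_neg hy, zero_mul, zero_mul]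
  rw [Finset.sum_congr rfl fun y _ => hrow y]
  rw [Finset.sum_ite, Finset.sum_const_zero, add_zero, Finset.sum_const, nsmul_eq_mul]
  rw [show (univ.filter (fun y : Fin n → ZMod 2 => y ∈ C)).card = Nat.card C from by
    rw [Nat.card_eq_fintype_card, Fintype.card_subtype]]
  ring

set_option maxHeartbeats 1000000 in
lemma mid_eq {n k : ℕ} (G : Fin k → Fin n → ZMod 2) (C : Submodule (ZMod 2) (Fin n → ZMod 2))
    (hC : C = Submodule.span (ZMod 2) (Set.range G)) [DecidablePred (· ∈ C)]
    (ε q : ℝ) (hq : q = (1 - 2*ε)^2) :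
    (∑ v : Fin n → ZMod 2, if (∀ i, (∑ j, G i j * v j) = 0) then q ^ hammingNorm v else 0)
      = ((2:ℝ)^n / (Nat.card C)) *
        ∑ c : Fin n → ZMod 2, (if c ∈ C then
          (2*ε*(1-ε)) ^ hammingNorm c * ((1-ε)^2+ε^2) ^ (n - hammingNorm c) else 0) := by
  haveI : Nonempty C := ⟨⟨0, C.zero_mem⟩⟩
  have hCpos : (0:ℝ) < (Nat.card C : ℝ) := by
    exact_mod_cast Nat.card_pos (α := C)
  have hCne : (Nat.card C : ℝ) ≠ 0 := ne_of_gt hCpos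
  have hstep : ∀ v : Fin n → ZMod 2,
      (if (∀ i, (∑ j, G i j * v j) = 0) then q ^ hammingNorm v else 0)
        = (∑ c : Fin n → ZMod 2, if c ∈ C then chi (∑ j, c j * v j) else 0)
            * q ^ hammingNorm v / (Nat.card C) := by
    intro v
    rw [orth G C hC v]
    by_cases h : ∀ i, (∑ j, G i j * v j) = 0
    · rw [if_pos h, if_pos h]
      field_simp
    · rw [if_neg h, if_neg h, zero_mul, zero_div]
  rw [Finset.sum_congr rfl fun v _ => hstep v]
  have hdist : ∀ v : Fin n → ZMod 2,
      (∑ c : Fin n → ZMod 2, if c ∈ C then chi (∑ j, c j * v j) else 0)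
          * q ^ hammingNorm v / (Nat.card C)
        = ∑ c : Fin n → ZMod 2, (if c ∈ C then
            chi (∑ j, c j * v j) * q ^ hammingNorm v / (Nat.card C) else 0) := by
    intro v
    rw [Finset.sum_mul, Finset.sum_div]
    refine Finset.sum_congr rfl fun c _ => ?_
    split_ifs
    · rfl
    · rw [zero_mul, zero_div]
  rw [Finset.sum_congr rfl fun v _ => hdist v, Finset.sum_comm]
  have hcol : ∀ c : Fin n → ZMod 2,
      (∑ v : Fin n → ZMod 2, (if c ∈ C then
          chi (∑ j, c j * v j) * q ^ hammingNorm v / (Nat.card C) else 0))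
        = ((2:ℝ)^n / (Nat.card C)) * (if c ∈ C then
            (2*ε*(1-ε)) ^ hammingNorm c * ((1-ε)^2+ε^2) ^ (n - hammingNorm c) else 0) := by
    intro c
    by_cases hc : c ∈ C
    · rw [if_pos hc]
      have hif : (∑ v : Fin n → ZMod 2, if c ∈ C then
            chi (∑ j, c j * v j) * q ^ hammingNorm v / (Nat.card C) else 0)
          = (∑ v : Fin n → ZMod 2, chi (∑ j, c j * v j) * q ^ hammingNorm v) / (Nat.card C) := by
        rw [Finset.sum_div]
        refine Finset.sum_congr rfl fun v _ => ?_
        rw [if_pos hc]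
      rw [hif, inner_sum]
      have h1 : (1-q) = 2 * (2*ε*(1-ε)) := by rw [hq]; ring
      have h2 : (1+q) = 2 * ((1-ε)^2+ε^2) := by rw [hq]; ring
      have hle : hammingNorm c ≤ n := by
        have h3 := hammingNorm_le_card_fintype (x := c)
        simpa using h3
      rw [h1, h2]
      rw [show ((2:ℝ) * (2*ε*(1-ε))) ^ hammingNorm c *
            ((2:ℝ) * ((1-ε)^2+ε^2)) ^ (n - hammingNorm c)
          = ((2:ℝ) ^ hammingNorm c * 2 ^ (n - hammingNorm c)) *
            ((2*ε*(1-ε)) ^ hammingNorm c * ((1-ε)^2+ε^2) ^ (n - hammingNorm c)) from by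
        rw [mul_pow 2 (2*ε*(1-ε)) (hammingNorm c),
          mul_pow 2 ((1-ε)^2+ε^2) (n - hammingNorm c)]; ring]
      rw [← pow_add, Nat.add_sub_cancel' hle]
      ring
    · rw [if_neg hc, mul_zero]
      exact Finset.sum_eq_zero fun v _ => if_neg hc
  rw [Finset.sum_congr rfl fun c _ => hcol c, ← Finset.mul_sum]

end NoiseCodeSM

open NoiseCodeSM

theorem noise_code_second_moment (n k : ℕ) (G : Fin k → Fin n → ZMod 2)
    (C : Submodule (ZMod 2) (Fin n → ZMod 2))
    (hC : C = Submodule.span (ZMod 2) (Set.range G))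
    (ε : ℝ) (hε0 : 0 ≤ ε) (hε1 : ε ≤ 1 / 2) (p : ℝ) (hp : p = (1 - 2 * ε) ^ 2) :
    (∑ x : Fin n → ZMod 2, noiseOpZ n ε (codeFn n C) x ^ 2) / 2 ^ n =
      ∑ S : Finset (Fin n),
        p ^ S.card * (1 - p) ^ (n - S.card) * 2 ^ ((S.card : ℝ) - colRank G S) := by
  classical
  have hR : (∑ S : Finset (Fin n),
      p ^ S.card * (1 - p) ^ (n - S.card) * 2 ^ ((S.card : ℝ) - colRank G S))
      = ∑ v : Fin n → ZMod 2,
          (if (∀ i, (∑ j, G i j * v j) = 0) then p ^ hammingNorm v else 0) := by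
    have h1 : ∀ S : Finset (Fin n),
        p ^ S.card * (1 - p) ^ (n - S.card) * 2 ^ ((S.card : ℝ) - colRank G S)
          = ∑ v : Fin n → ZMod 2,
              (if ((∀ i, (∑ j, G i j * v j) = 0) ∧ ∀ j, v j ≠ 0 → j ∈ S)
                then p ^ S.card * (1 - p) ^ (n - S.card) else 0) := by
      intro S
      rw [← count_eq G S, Finset.sum_ite, Finset.sum_const_zero, add_zero,
        Finset.sum_const, nsmul_eq_mul]
      ring
    rw [Finset.sum_congr rfl fun S _ => h1 S, Finset.sum_comm]
    refine Finset.sum_congr rfl fun v _ => ?_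
    by_cases hv : ∀ i, (∑ j, G i j * v j) = 0
    · rw [if_pos hv]
      have h2 : ∀ S : Finset (Fin n),
          (((∀ i, (∑ j, G i j * v j) = 0) ∧ ∀ j, v j ≠ 0 → j ∈ S)
            ↔ ((univ.filter fun j => v j ≠ 0) ⊆ S)) := by
        intro S
        constructor
        · intro h j hj
          exact h.2 j (Finset.mem_filter.mp hj).2
        · intro h
          exact ⟨hv, fun j hj => h (Finset.mem_filter.mpr ⟨Finset.mem_univ j, hj⟩)⟩
      rw [Finset.sum_congr rfl fun S _ => if_congr (h2 S) rfl rfl]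
      rw [superset_sum p (univ.filter fun j => v j ≠ 0)]
      congr 1
    · rw [if_neg hv]
      exact Finset.sum_eq_zero fun S _ => if_neg (fun h => hv h.1)
  rw [hR, mid_eq G C hC ε p hp, lhs_eq C ε]
  have hCpos : (0:ℝ) < (Nat.card C : ℝ) := by
    haveI : Nonempty C := ⟨⟨0, C.zero_mem⟩⟩
    exact_mod_cast Nat.card_pos (α := C)
  have hCne : (Nat.card C : ℝ) ≠ 0 := ne_of_gt hCpos
  have h2n : ((2:ℝ)^n) ≠ 0 := by positivity
  field_simp
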